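/- Let F be a field, p ∈ Fˣ. Let S and T be multisets over Fˣ such that S contains a geometric progression {α, pα, …, p^{a−1}α} of ratio p and length a, and T contains a geometric progression {β, pβ, …, p^{b−1}β} of ratio p and length b. Then the product multiset S·T = {st : s ∈ S, t ∈ T} (with multiplicities) contains a geometric progression of ratio p and length a + b − 1. -/
import Mathlib

lemma product_map_map {α β α' β' : Type*} (f : α → α') (g : β → β')
    (s : Multiset α) (t : Multiset β) :
    (s ×ˢ t).map (Prod.map f g) = (s.map f) ×ˢ (t.map g) := by
  induction s using Multiset.induction with
  | empty => simp
  | cons a s ih =>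
    simp [Multiset.cons_product, Multiset.map_map, ih, Function.comp_def]

lemma prod_mono {α β : Type*} [DecidableEq α] [DecidableEq β]
    {s s' : Multiset α} {t t' : Multiset β}
    (hs : s ≤ s') (ht : t ≤ t') : s ×ˢ t ≤ s' ×ˢ t' := by
  obtain ⟨d, rfl⟩ := Multiset.le_iff_exists_add.mp hs
  obtain ⟨e, rfl⟩ := Multiset.le_iff_exists_add.mp ht
  rw [Multiset.add_product, Multiset.product_add, add_assoc]
  exact Multiset.le_add_right _ _

/-- If `S` contains a geometric progression of ratio `p` and length `a ≥ 1`, and `T`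
contains one of length `b ≥ 1`, then the product multiset `S·T` contains a geometric
progression of ratio `p` and length `a + b - 1`. -/
theorem stmt_7 {F : Type*} [Field F] (p : Fˣ) (a b : ℕ) (ha : 1 ≤ a) (hb : 1 ≤ b)
    (S T : Multiset Fˣ) (α β : Fˣ)
    (hS : (Multiset.range a).map (fun j => p ^ j * α) ≤ S)
    (hT : (Multiset.range b).map (fun j => p ^ j * β) ≤ T) :
    ∃ γ : Fˣ, (Multiset.range (a + b - 1)).map (fun j => p ^ j * γ) ≤
      (S ×ˢ T).map (fun x => x.1 * x.2) := by
  classical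
  refine ⟨α * β, ?_⟩
  set n := a + b - 1 with hn
  set f : ℕ → ℕ × ℕ := fun k => (min k (a - 1), k - min k (a - 1)) with hf
  set u : ℕ → Fˣ := fun i => p ^ i * α with hu
  set v : ℕ → Fˣ := fun j => p ^ j * β with hv
  have hfinj : Function.Injective f := by
    intro k k' h
    have h1 : (f k).1 + (f k).2 = k := Nat.add_sub_cancel' (Nat.min_le_left _ _)
    have h2 : (f k').1 + (f k').2 = k' := Nat.add_sub_cancel' (Nat.min_le_left _ _)
    rw [← h1, ← h2, h]
  have hstep1 : (Multiset.range n).map f ≤ (Multiset.range a) ×ˢ (Multiset.range b) := by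
    rw [Multiset.le_iff_subset ((Multiset.nodup_range n).map hfinj)]
    intro x hx
    obtain ⟨k, hk, rfl⟩ := Multiset.mem_map.mp hx
    rw [Multiset.mem_range] at hk
    refine Multiset.mem_product.mpr ⟨?_, ?_⟩ <;> rw [Multiset.mem_range]
    · exact lt_of_le_of_lt (Nat.min_le_right _ _) (Nat.sub_lt ha Nat.one_pos)
    · show k - min k (a - 1) < b
      rw [hn] at hk
      omega
  have hstep2 : ((Multiset.range n).map f).map (Prod.map u v) ≤
      ((Multiset.range a).map u) ×ˢ ((Multiset.range b).map v) := by
    rw [← product_map_map]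
    exact Multiset.map_le_map hstep1
  have hstep3 : ((Multiset.range a).map u) ×ˢ ((Multiset.range b).map v) ≤ S ×ˢ T :=
    prod_mono hS hT
  have hkey : (Multiset.range n).map (fun j => p ^ j * (α * β)) =
      (((Multiset.range n).map f).map (Prod.map u v)).map (fun x => x.1 * x.2) := by
    rw [Multiset.map_map, Multiset.map_map]
    refine Multiset.map_congr rfl ?_
    intro k _
    have hmin : min k (a - 1) + (k - min k (a - 1)) = k :=
      Nat.add_sub_cancel' (Nat.min_le_left _ _)
    simp only [Function.comp_apply, hf, hu, hv, Prod.map]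
    rw [mul_mul_mul_comm, ← pow_add, hmin]
  rw [hkey]
  exact Multiset.map_le_map (le_trans hstep2 hstep3)
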